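/- Let π and β be policies and ρ an initial probability mass function on Z. Then J(π) − J(β) = (1/(1−γ)) · Σ_{z ∈ Z} d^π(z) · Σ_{a ∈ A} π(a|z) · A^β(z,a). -/

import Mathlib

open scoped BigOperators

/-- One application of the state transition matrix `P_μ` induced by policy `μpol`
to a distribution `ρ` over latent states: `(ρ P_μ)(z') = Σ_z ρ(z) Σ_a μ(a|z)·[F(z,a) = z']`. -/
noncomputable def stepDist {Z A : Type*} [Fintype Z] [Fintype A] [DecidableEq Z]
    (F : Z × A → Z) (μpol : Z → A → ℝ) (ρ : Z → ℝ) : Z → ℝ :=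
  fun z' => ∑ z : Z, ρ z * ∑ a : A, μpol z a * (if F (z, a) = z' then (1 : ℝ) else 0)

/-- Discounted occupancy distribution `d^μ(z) = (1−γ) Σ_{t} γ^t (ρ P_μ^t)(z)`. -/
noncomputable def occupancy {Z A : Type*} [Fintype Z] [Fintype A] [DecidableEq Z]
    (F : Z × A → Z) (γ : ℝ) (μpol : Z → A → ℝ) (ρ : Z → ℝ) : Z → ℝ :=
  fun z => (1 - γ) * ∑' t : ℕ, γ ^ t * ((stepDist F μpol)^[t] ρ) z

section aux
variable {Z A : Type*} [Fintype Z] [Fintype A] [DecidableEq Z]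

lemma stepDist_pair (F : Z × A → Z) (p : Z → A → ℝ) (ρ : Z → ℝ) (f : Z → ℝ) :
    ∑ z' : Z, stepDist F p ρ z' * f z' = ∑ z : Z, ρ z * ∑ a : A, p z a * f (F (z, a)) := by
  unfold stepDist
  simp only [Finset.sum_mul, Finset.mul_sum, ite_mul, one_mul, zero_mul, mul_ite, mul_zero]
  rw [Finset.sum_comm]
  refine Finset.sum_congr rfl fun z _ => ?_
  rw [Finset.sum_comm]
  refine Finset.sum_congr rfl fun a _ => ?_
  simp [mul_assoc]

lemma iter_nonneg (F : Z × A → Z) (p : Z → A → ℝ) (hp0 : ∀ z a, 0 ≤ p z a)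
    (ρ : Z → ℝ) (hρ0 : ∀ z, 0 ≤ ρ z) (n : ℕ) (z : Z) :
    0 ≤ ((stepDist F p)^[n] ρ) z := by
  induction n generalizing z with
  | zero => exact hρ0 z
  | succ n ih =>
    rw [Function.iterate_succ_apply']
    unfold stepDist
    refine Finset.sum_nonneg fun w _ => mul_nonneg (ih w) (Finset.sum_nonneg fun a _ =>
      mul_nonneg (hp0 w a) (by positivity))

lemma iter_sum (F : Z × A → Z) (p : Z → A → ℝ) (hp1 : ∀ z, ∑ a : A, p z a = 1)
    (ρ : Z → ℝ) (hρ1 : ∑ z : Z, ρ z = 1) (n : ℕ) :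
    ∑ z : Z, ((stepDist F p)^[n] ρ) z = 1 := by
  induction n with
  | zero => simpa using hρ1
  | succ n ih =>
    rw [Function.iterate_succ_apply']
    have := stepDist_pair F p ((stepDist F p)^[n] ρ) (fun _ => (1:ℝ))
    simpa [hp1, ih] using this

end aux

/-- performance difference lemma:
`J(π) − J(β) = (1/(1−γ)) Σ_z d^π(z) Σ_a π(a|z) A^β(z,a)`, where the value
functions `Vπ, Vβ` are characterized by their Bellman fixed-point equations,
`Q^β(z,a) = R(z,a) + γ·V^β(F(z,a))` and `A^β(z,a) = Q^β(z,a) − V^β(z)`. -/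

theorem performance_difference
    {Z A : Type*} [Fintype Z] [Fintype A] [Nonempty Z] [Nonempty A] [DecidableEq Z]
    (F : Z × A → Z) (R : Z × A → ℝ) (γ : ℝ) (hγ0 : 0 < γ) (hγ1 : γ < 1)
    (π β : Z → A → ℝ)
    (hπ0 : ∀ z a, 0 ≤ π z a) (hπ1 : ∀ z, ∑ a : A, π z a = 1)
    (hβ0 : ∀ z a, 0 ≤ β z a) (hβ1 : ∀ z, ∑ a : A, β z a = 1)
    (ρ : Z → ℝ) (hρ0 : ∀ z, 0 ≤ ρ z) (hρ1 : ∑ z : Z, ρ z = 1)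
    (Vπ Vβ : Z → ℝ)
    (hVπ : ∀ z, Vπ z = ∑ a : A, π z a * (R (z, a) + γ * Vπ (F (z, a))))
    (hVβ : ∀ z, Vβ z = ∑ a : A, β z a * (R (z, a) + γ * Vβ (F (z, a)))) :
    (∑ z : Z, ρ z * Vπ z) - (∑ z : Z, ρ z * Vβ z) =
      (1 / (1 - γ)) * ∑ z : Z, occupancy F γ π ρ z *
        ∑ a : A, π z a * ((R (z, a) + γ * Vβ (F (z, a))) - Vβ z) := by
  set g : Z → ℝ := fun z => ∑ a : A, π z a * ((R (z, a) + γ * Vβ (F (z, a))) - Vβ z) with hg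
  set D : Z → ℝ := fun z => Vπ z - Vβ z with hD
  set p : ℕ → Z → ℝ := fun t => (stepDist F π)^[t] ρ with hp
  -- key Bellman-difference identity
  have hkey : ∀ z, D z = g z + γ * ∑ a : A, π z a * D (F (z, a)) := by
    intro z
    have h1 : D z = (∑ a : A, π z a * (R (z, a) + γ * Vπ (F (z, a)))) - Vβ z := by
      simp [hD, hVπ z]
    have hv : Vβ z = ∑ a : A, π z a * Vβ z := by rw [← Finset.sum_mul, hπ1 z, one_mul]
    rw [h1, hv]
    simp only [hg, hD, Finset.mul_sum, ← Finset.sum_add_distrib, ← Finset.sum_sub_distrib]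
    exact Finset.sum_congr rfl fun a _ => by ring
  -- p t properties
  have hp0 : ∀ t z, 0 ≤ p t z := fun t z => iter_nonneg F π hπ0 ρ hρ0 t z
  have hp1' : ∀ t, ∑ z : Z, p t z = 1 := fun t => iter_sum F π hπ1 ρ hρ1 t
  have hple : ∀ t z, p t z ≤ 1 := by
    intro t z
    calc p t z ≤ ∑ w : Z, p t w := Finset.single_le_sum (fun w _ => hp0 t w) (Finset.mem_univ z)
    _ = 1 := hp1' t
  set c : ℕ → ℝ := fun t => ∑ z : Z, p t z * g z with hc
  set G : ℝ := ∑ z : Z, |g z| with hG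
  have hcbd : ∀ t, |c t| ≤ G := by
    intro t
    calc |c t| ≤ ∑ z : Z, |p t z * g z| := Finset.abs_sum_le_sum_abs _ _
    _ ≤ ∑ z : Z, |g z| := by
        refine Finset.sum_le_sum fun z _ => ?_
        rw [abs_mul, abs_of_nonneg (hp0 t z)]
        nlinarith [abs_nonneg (g z), hple t z, hp0 t z]
  -- expansion lemma
  have hexp : ∀ n, ∑ z : Z, ρ z * D z =
      (∑ t ∈ Finset.range n, γ ^ t * c t) + γ ^ n * ∑ z : Z, p n z * D z := by
    intro n
    induction n with
    | zero => simp [hp]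
    | succ n ih =>
      rw [ih, Finset.sum_range_succ]
      have h3 : ∑ z : Z, p n z * D z = c n + γ * ∑ z : Z, p (n+1) z * D z := by
        have h4 : ∑ z : Z, p (n+1) z * D z = ∑ z : Z, p n z * ∑ a : A, π z a * D (F (z, a)) := by
          simp only [hp, Function.iterate_succ_apply']
          exact stepDist_pair F π _ D
        rw [h4]
        calc ∑ z : Z, p n z * D z
            = ∑ z : Z, p n z * (g z + γ * ∑ a : A, π z a * D (F (z, a))) := by
              refine Finset.sum_congr rfl fun z _ => ?_; rw [← hkey z]
          _ = c n + γ * ∑ z : Z, p n z * ∑ a : A, π z a * D (F (z, a)) := by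
              rw [hc]; rw [Finset.mul_sum, ← Finset.sum_add_distrib]
              congr 1; ext z; ring
      rw [h3]; ring
  -- summability
  have hγn : 0 ≤ γ := hγ0.le
  have hsum : Summable (fun t => γ ^ t * c t) := by
    refine Summable.of_norm_bounded (g := fun t => G * γ ^ t)
      ((summable_geometric_of_lt_one hγn hγ1).mul_left G) fun t => ?_
    rw [Real.norm_eq_abs, abs_mul, abs_pow, abs_of_nonneg hγn]
    calc γ ^ t * |c t| ≤ γ ^ t * G := by
          exact mul_le_mul_of_nonneg_left (hcbd t) (by positivity)
      _ = G * γ ^ t := mul_comm _ _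
  -- limit: ∑ ρ D = ∑' t, γ^t c t
  have htail : Filter.Tendsto (fun n => γ ^ n * ∑ z : Z, p n z * D z) Filter.atTop (nhds 0) := by
    set M : ℝ := ∑ z : Z, |D z| with hM
    have hb : ∀ n, |γ ^ n * ∑ z : Z, p n z * D z| ≤ M * γ ^ n := by
      intro n
      rw [abs_mul, abs_pow, abs_of_nonneg hγn, mul_comm]
      refine mul_le_mul_of_nonneg_right ?_ (by positivity)
      calc |∑ z : Z, p n z * D z| ≤ ∑ z : Z, |p n z * D z| := Finset.abs_sum_le_sum_abs _ _
        _ ≤ M := by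
            rw [hM]
            refine Finset.sum_le_sum fun z _ => ?_
            rw [abs_mul, abs_of_nonneg (hp0 n z)]
            nlinarith [abs_nonneg (D z), hple n z, hp0 n z]
    have hgeo : Filter.Tendsto (fun n : ℕ => M * γ ^ n) Filter.atTop (nhds 0) := by
      have := tendsto_pow_atTop_nhds_zero_of_lt_one hγn hγ1
      simpa using this.const_mul M
    refine squeeze_zero_norm (fun n => ?_) hgeo
    rw [Real.norm_eq_abs]; exact hb n
  have hlim : ∑' t : ℕ, γ ^ t * c t = ∑ z : Z, ρ z * D z := by
    have h1 := hsum.hasSum.tendsto_sum_nat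
    have h2 : Filter.Tendsto (fun n => ∑ t ∈ Finset.range n, γ ^ t * c t)
        Filter.atTop (nhds (∑ z : Z, ρ z * D z)) := by
      have : (fun n => ∑ t ∈ Finset.range n, γ ^ t * c t)
          = fun n => (∑ z : Z, ρ z * D z) - γ ^ n * ∑ z : Z, p n z * D z := by
        funext n; rw [hexp n]; ring
      rw [this]
      simpa using (tendsto_const_nhds (x := ∑ z : Z, ρ z * D z)).sub htail
    exact tendsto_nhds_unique h1 h2
  -- RHS manipulation
  have h1γ : (1:ℝ) - γ ≠ 0 := by linarith
  have hsumz : ∀ z, Summable (fun t => γ ^ t * p t z * g z) := by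
    intro z
    refine Summable.mul_right _ ?_
    refine Summable.of_norm_bounded (g := fun t => γ ^ t)
      (summable_geometric_of_lt_one hγn hγ1) fun t => ?_
    rw [Real.norm_eq_abs, abs_mul, abs_pow, abs_of_nonneg hγn, abs_of_nonneg (hp0 t z)]
    nlinarith [hple t z, pow_nonneg hγn t, hp0 t z]
  have hRHS : (1 / (1 - γ)) * ∑ z : Z, occupancy F γ π ρ z * g z = ∑' t : ℕ, γ ^ t * c t := by
    have h5 : ∀ z : Z, occupancy F γ π ρ z * g z
        = (1 - γ) * ∑' t : ℕ, γ ^ t * p t z * g z := by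
      intro z
      unfold occupancy
      rw [mul_assoc, ← tsum_mul_right]
    simp only [h5]
    rw [← Finset.mul_sum, ← mul_assoc, one_div, inv_mul_cancel₀ h1γ, one_mul]
    rw [← Summable.tsum_finsetSum (fun z _ => hsumz z)]
    congr 1; funext t
    rw [hc, Finset.mul_sum]
    refine Finset.sum_congr rfl fun z _ => by ring
  rw [← hg] at *
  have hL : (∑ z : Z, ρ z * Vπ z) - (∑ z : Z, ρ z * Vβ z) = ∑ z : Z, ρ z * D z := by
    rw [← Finset.sum_sub_distrib]
    refine Finset.sum_congr rfl fun z _ => by simp [hD]; ring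
  rw [hL, ← hlim, hRHS]
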